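/- Let G be a connected finite simple graph of even order and f : V(G) → ℤ⁺. If G contains, for every H : V(G) → 2^ℕ with H(v) ∈ {J_f(v), J_f⁺(v)}, an H-factor, then for every nonempty S ⊆ V(G), o(G - S) ≤ Σ_{v∈S} f(v). (Sufficiency direction of the main theorem, proved by choosing H(v) = J_f(v) on S and H(v) = J_f⁺(v) off S, and counting edges from odd components into S.) -/
import Mathlib


open SimpleGraph

/-- Degree of `v` in graph `F` (no decidability assumptions). -/
noncomputable def fdeg {V : Type*} (F : SimpleGraph V) (v : V) : ℕ :=
  Nat.card (F.neighborSet v)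

/-- Number of odd components of `G - S`. -/
noncomputable def oddComp {V : Type*} [Fintype V] (G : SimpleGraph V) (S : Set V) : ℕ :=
  Nat.card {c : (G.induce (Sᶜ : Set V)).ConnectedComponent // Odd (Nat.card c.supp)}

/-- The set `J_f(v)`: odd numbers at most `f v`, together with `f v` itself. -/
def Jf {V : Type*} (f : V → ℕ) (v : V) : Set ℕ := {m | Odd m ∧ m ≤ f v} ∪ {f v}

/-- The set `J_f⁺(v)`: odd numbers at most `f v + 1`. -/
def Jfp {V : Type*} (f : V → ℕ) (v : V) : Set ℕ := {m | Odd m ∧ m ≤ f v + 1}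

lemma fdeg_eq_degree {V : Type*} [Fintype V] (F : SimpleGraph V) [DecidableRel F.Adj] (v : V) :
    fdeg F v = F.degree v := by
  rw [fdeg, Nat.card_eq_fintype_card, SimpleGraph.card_neighborSet_eq_degree]

lemma even_sum_fdeg {V : Type*} [Fintype V] (F : SimpleGraph V) :
    Even (∑ v, fdeg F v) := by
  classical
  simp_rw [fdeg_eq_degree]
  rw [SimpleGraph.sum_degrees_eq_twice_card_edges]
  exact even_two_mul _

lemma fdeg_induce {V : Type*} (F : SimpleGraph V) (T : Set V)
    (hT : ∀ v ∈ T, ∀ w, F.Adj v w → w ∈ T) (v : T) :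
    fdeg (F.induce T) v = fdeg F ↑v := by
  exact Nat.card_congr
    ⟨fun w => ⟨w.1.1, w.2⟩, fun w => ⟨⟨w.1, hT ↑v v.2 w.1 w.2⟩, w.2⟩,
      fun w => rfl, fun w => rfl⟩

/-- In a finite graph, a set closed under adjacency with all degrees odd has even size. -/
lemma closed_odd_parity {V : Type*} [Fintype V] (F : SimpleGraph V) (T : Set V)
    (hT : ∀ v ∈ T, ∀ w, F.Adj v w → w ∈ T)
    (hodd : ∀ v ∈ T, Odd (fdeg F v)) : Even (Nat.card T) := by
  classical
  haveI : Fintype T := Fintype.ofFinite _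
  have heven : Even (∑ v : T, fdeg F ↑v) := by
    have := even_sum_fdeg (F.induce T)
    simpa only [fdeg_induce F T hT] using this
  by_contra hodd'
  rw [Nat.not_even_iff_odd] at hodd'
  have h1 : (∑ v : T, fdeg F ↑v) % 2 = 1 := by
    rw [Finset.sum_nat_mod]
    have : ∀ v : T, fdeg F ↑v % 2 = 1 := fun v => Nat.odd_iff.mp (hodd ↑v v.2)
    simp only [this, Finset.sum_const, Finset.card_univ, smul_eq_mul, mul_one]
    rw [← Nat.card_eq_fintype_card]
    exact Nat.odd_iff.mp hodd'
  rw [Nat.even_iff, h1] at heven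
  exact one_ne_zero heven

theorem main_sufficiency {V : Type*} [Fintype V] (G : SimpleGraph V)
    (hG : G.Connected) (heven : Even (Fintype.card V))
    (f : V → ℕ) (hf : ∀ v, 0 < f v)
    (h : ∀ H : V → Set ℕ, (∀ v, H v = Jf f v ∨ H v = Jfp f v) →
      ∃ F : SimpleGraph V, F ≤ G ∧ ∀ v, fdeg F v ∈ H v) :
    ∀ S : Finset V, S.Nonempty → oddComp G ↑S ≤ ∑ v ∈ S, f v := by
  intro S hS
  classical
  obtain ⟨F, hFG, hFdeg⟩ := h (fun v => if v ∈ S then Jf f v else Jfp f v)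
    (by intro v; by_cases hv : v ∈ S <;> simp [hv])
  have hoddd : ∀ v : V, v ∉ S → Odd (fdeg F v) := by
    intro v hv
    have := hFdeg v
    simp only [hv, if_neg, if_false, Jfp, Set.mem_setOf_eq] at this
    exact this.1
  have hled : ∀ v ∈ S, fdeg F v ≤ f v := by
    intro v hv
    have := hFdeg v
    simp only [hv, if_true, Jf, Set.mem_union, Set.mem_setOf_eq, Set.mem_singleton_iff] at this
    rcases this with h1 | h2
    · exact h1.2
    · exact h2.le
  -- Step 1: every odd component sends an F-edge to S
  have key : ∀ c : (G.induce ((↑S : Set V)ᶜ)).ConnectedComponent,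
      Odd (Nat.card c.supp) → ∃ s, s ∈ S ∧ ∃ v : ((↑S : Set V)ᶜ : Set V),
        SimpleGraph.connectedComponentMk _ v = c ∧ F.Adj s ↑v := by
    intro c hc
    by_contra hcon
    push_neg at hcon
    set T : Set V := Subtype.val '' c.supp with hTdef
    have hTodd : Odd (Nat.card T) := by
      rwa [hTdef, Nat.card_image_of_injective Subtype.val_injective]
    have hTmem : ∀ w (hw : w ∈ ((↑S : Set V)ᶜ : Set V)),
        SimpleGraph.connectedComponentMk _ (⟨w, hw⟩ : ((↑S : Set V)ᶜ : Set V)) = c → w ∈ T :=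
      fun w hw hwc => ⟨⟨w, hw⟩, hwc, rfl⟩
    have hTclosed : ∀ v ∈ T, ∀ w, F.Adj v w → w ∈ T := by
      rintro v ⟨⟨v, hv⟩, hvc, rfl⟩ w hw
      have hwS : w ∈ ((↑S : Set V)ᶜ : Set V) := by
        intro hwS
        exact hcon w hwS ⟨v, hv⟩ hvc hw.symm
      refine hTmem w hwS ?_
      rw [← hvc]
      have hadj : (G.induce ((↑S : Set V)ᶜ)).Adj ⟨w, hwS⟩ ⟨v, hv⟩ := by
        simp only [SimpleGraph.comap_adj, Function.Embedding.coe_subtype]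
        exact (hFG hw).symm
      exact SimpleGraph.ConnectedComponent.sound hadj.reachable
    have hToddDeg : ∀ v ∈ T, Odd (fdeg F v) := by
      rintro v ⟨⟨v, hv⟩, _, rfl⟩
      exact hoddd v (by simpa using hv)
    have := closed_odd_parity F T hTclosed hToddDeg
    rw [Nat.even_iff] at this
    rw [Nat.odd_iff, this] at hTodd
    exact zero_ne_one hTodd
  -- Step 2: injection into neighbors of S
  choose s hsS v hvc hadj using
    fun c : {c : (G.induce ((↑S : Set V)ᶜ)).ConnectedComponent // Odd (Nat.card c.supp)} =>
      key c.1 c.2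
  set g : {c : (G.induce ((↑S : Set V)ᶜ)).ConnectedComponent // Odd (Nat.card c.supp)} →
      Σ x : {x // x ∈ S}, F.neighborSet ↑x :=
    fun c => ⟨⟨s c, hsS c⟩, ⟨↑(v c), hadj c⟩⟩ with hg
  have hgi : Function.Injective g := by
    intro c1 c2 heq
    have h1 : ((g c1).fst : V) = ((g c2).fst : V) := congrArg (fun p => (p.1 : V)) heq
    have h2' := (Sigma.ext_iff.mp heq).2
    rw [Subtype.heq_iff_coe_eq (fun x => by rw [h1])] at h2'
    have h2 : (↑(v c1) : V) = (↑(v c2) : V) := h2'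
    have hv2 : v c1 = v c2 := Subtype.ext h2
    have : c1.1 = c2.1 := by rw [← hvc c1, ← hvc c2, hv2]
    exact Subtype.ext this
  calc oddComp G ↑S
      ≤ Nat.card (Σ x : {x // x ∈ S}, F.neighborSet ↑x) :=
        Nat.card_le_card_of_injective g hgi
    _ = ∑ x : {x // x ∈ S}, fdeg F ↑x := by
        rw [Nat.card_eq_fintype_card, Fintype.card_sigma]
        exact Finset.sum_congr rfl fun x _ => by
          rw [fdeg, Nat.card_eq_fintype_card]
    _ = ∑ x ∈ S, fdeg F x := Finset.sum_coe_sort S (fdeg F)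
    _ ≤ ∑ x ∈ S, f x := Finset.sum_le_sum hled
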